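/- Let c ∈ ℝ and let a : ℝ → ℂ be a function satisfying a(k) = 1 + i·c·k − (c²/2)·k² + O(k³) as k → 0 (in particular a(k) ≠ 0 for k in some neighborhood of 0). Suppose r : ℝ → ℂ satisfies |r(k)|² = 1/|a(k)|² − 1 for all k near 0. Then |r(k)|² = O(k³) as k → 0; in particular r(k) → 0 as k → 0. -/

import Mathlib

open Filter Asymptotics

/-- If a(k) = 1 + ick − (c²/2)k² + O(k³) as k → 0 (c real) and
|r(k)|² = 1/|a(k)|² − 1 for k near 0, then |r(k)|² = O(k³) as k → 0;
in particular r(k) → 0 as k → 0. -/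
theorem reflection_coefficient_small_k (c : ℝ) (a r : ℝ → ℂ)
    (ha : (fun k : ℝ =>
        a k - (1 + Complex.I * (c : ℂ) * (k : ℂ) - (c : ℂ) ^ 2 / 2 * (k : ℂ) ^ 2))
          =O[nhds 0] fun k : ℝ => k ^ 3)
    (hr : ∀ᶠ k : ℝ in nhds 0, ‖r k‖ ^ 2 = 1 / ‖a k‖ ^ 2 - 1) :
    ((fun k : ℝ => ‖r k‖ ^ 2) =O[nhds 0] fun k : ℝ => k ^ 3) ∧
      Tendsto r (nhds 0) (nhds 0) := by
  set p : ℝ → ℂ := fun k =>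
    1 + Complex.I * (c : ℂ) * (k : ℂ) - (c : ℂ) ^ 2 / 2 * (k : ℂ) ^ 2 with hpdef
  have hP2 : ∀ k : ℝ, ‖p k‖ ^ 2 = 1 + c ^ 4 * k ^ 4 / 4 := by
    intro k
    have hpk : p k = ((1 - c ^ 2 / 2 * k ^ 2 : ℝ) : ℂ) + ((c * k : ℝ) : ℂ) * Complex.I := by
      simp only [hpdef]; push_cast; ring
    rw [hpk, Complex.sq_norm, Complex.normSq_add_mul_I]
    ring
  have hpc : Continuous p := by
    simp only [hpdef]; fun_prop
  have hp1 : Tendsto p (nhds 0) (nhds 1) := by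
    simpa [hpdef] using hpc.tendsto 0
  have hk3 : Tendsto (fun k : ℝ => k ^ 3) (nhds 0) (nhds (0 : ℝ)) := by
    simpa using (continuous_pow 3).tendsto (0 : ℝ)
  have hap : Tendsto (fun k => a k - p k) (nhds 0) (nhds 0) := ha.trans_tendsto hk3
  have haT : Tendsto a (nhds 0) (nhds 1) := by
    have := hap.add hp1
    simpa using this
  have hA : Tendsto (fun k => ‖a k‖) (nhds 0) (nhds 1) := by
    simpa using haT.norm
  have hP : Tendsto (fun k => ‖p k‖) (nhds 0) (nhds 1) := by
    simpa using hp1.norm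
  have hA2 : Tendsto (fun k => ‖a k‖ ^ 2) (nhds 0) (nhds 1) := by
    simpa using hA.pow 2
  have h1 : (fun k => ‖a k‖ - ‖p k‖) =O[nhds 0]
      fun k : ℝ => k ^ 3 := by
    refine (IsBigO.of_bound 1 ?_).trans ha
    filter_upwards with k
    simp only [one_mul, Real.norm_eq_abs]
    exact abs_norm_sub_norm_le (a k) (p k)
  have h2 : (fun k => ‖a k‖ + ‖p k‖) =O[nhds 0]
      fun _ : ℝ => (1 : ℝ) := (hA.add hP).isBigO_one ℝ
  have hmul : (fun k => (‖a k‖ - ‖p k‖) *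
      (‖a k‖ + ‖p k‖)) =O[nhds 0] fun k : ℝ => k ^ 3 := by
    simpa using h1.mul h2
  have hsmall : ∀ᶠ k : ℝ in nhds 0, |k| ≤ 1 := by
    filter_upwards [Metric.ball_mem_nhds (0 : ℝ) one_pos] with k hk
    rw [Metric.mem_ball, Real.dist_eq, sub_zero] at hk
    exact hk.le
  have hk4 : (fun k : ℝ => c ^ 4 * k ^ 4 / 4) =O[nhds 0] fun k : ℝ => k ^ 3 := by
    refine IsBigO.of_bound (c ^ 4 / 4) ?_
    filter_upwards [hsmall] with k hk
    have h4 : |k| ^ 4 ≤ |k| ^ 3 :=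
      pow_le_pow_of_le_one (abs_nonneg k) hk (by norm_num)
    have hc : (0:ℝ) ≤ c ^ 4 := by positivity
    simp only [Real.norm_eq_abs, abs_div, abs_mul, abs_pow, abs_abs]
    rw [pow_abs, abs_of_nonneg hc, show |(4:ℝ)| = 4 by norm_num]
    nlinarith [abs_nonneg k]
  have hA2sub : (fun k => ‖a k‖ ^ 2 - 1) =O[nhds 0] fun k : ℝ => k ^ 3 := by
    have heq : ∀ k : ℝ, ‖a k‖ ^ 2 - 1 =
        (‖a k‖ - ‖p k‖) *
          (‖a k‖ + ‖p k‖) + c ^ 4 * k ^ 4 / 4 := by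
      intro k
      linear_combination hP2 k
    exact (hmul.add hk4).congr' (Eventually.of_forall fun k => (heq k).symm)
      EventuallyEq.rfl
  have hA2half : ∀ᶠ k : ℝ in nhds 0, 1 / 2 ≤ ‖a k‖ ^ 2 :=
    hA2.eventually (eventually_ge_nhds (by norm_num))
  have hrO : (fun k : ℝ => ‖r k‖ ^ 2) =O[nhds 0] fun k : ℝ => k ^ 3 := by
    refine (IsBigO.of_bound 2 ?_).trans hA2sub
    filter_upwards [hr, hA2half] with k hk hhalf
    rw [hk]
    have hpos : (0:ℝ) < ‖a k‖ ^ 2 := by linarith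
    simp only [Real.norm_eq_abs]
    rw [show (1 / ‖a k‖ ^ 2 - 1) =
      (1 - ‖a k‖ ^ 2) / (‖a k‖ ^ 2) by rw [div_sub_one hpos.ne']]
    rw [abs_div, abs_of_pos hpos, div_le_iff₀ hpos]
    have : |1 - ‖a k‖ ^ 2| = |‖a k‖ ^ 2 - 1| := abs_sub_comm _ _
    rw [this]
    nlinarith [abs_nonneg (‖a k‖ ^ 2 - 1)]
  refine ⟨hrO, ?_⟩
  have h0 : Tendsto (fun k => ‖r k‖ ^ 2) (nhds 0) (nhds 0) :=
    hrO.trans_tendsto hk3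
  have habs : Tendsto (fun k => ‖r k‖) (nhds 0) (nhds 0) := by
    have h := (Real.continuous_sqrt.tendsto 0).comp h0
    have hsq : ∀ k : ℝ, Real.sqrt (‖r k‖ ^ 2) = ‖r k‖ :=
      fun k => Real.sqrt_sq (norm_nonneg _)
    simpa [Function.comp_def, hsq, Real.sqrt_zero] using h
  rw [show (0:ℂ) = 0 from rfl]
  exact tendsto_zero_iff_norm_tendsto_zero.mpr (by simpa using habs)
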